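/- Let A be a Hurwitz real n×n matrix and let Q be any real n×n matrix. Then the integral W := ∫₀^∞ exp(tA) Q exp(tAᵀ) dt converges, and W is the unique solution of the Lyapunov equation A W + W Aᵀ + Q = 0. -/

import Mathlib

open MeasureTheory Matrix

open scoped Nat

section Aux
attribute [local instance] Matrix.linftyOpNormedRing Matrix.linftyOpNormedAlgebra

variable {n : ℕ}

lemma aux_spec_exp (B : Matrix (Fin n) (Fin n) ℂ) {μ : ℂ}
    (hμ : μ ∈ spectrum ℂ (NormedSpace.exp B)) :
    ∃ l ∈ spectrum ℂ B, μ = Complex.exp l := by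
  set M := NormedSpace.exp B with hM
  rw [spectrum.mem_iff, Algebra.algebraMap_eq_smul_one, Matrix.isUnit_iff_isUnit_det,
    isUnit_iff_ne_zero, not_not, ← Matrix.exists_mulVec_eq_zero_iff] at hμ
  obtain ⟨v, hv0, hv⟩ := hμ
  rw [Matrix.sub_mulVec, sub_eq_zero, Matrix.smul_mulVec, Matrix.one_mulVec] at hv
  -- hv : μ • v = M *ᵥ v
  let f : Module.End ℂ (Fin n → ℂ) := Matrix.mulVecLin M
  have hvE : v ∈ Module.End.eigenspace f μ := by
    rw [Module.End.mem_eigenspace_iff]; exact hv.symm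
  have hBM : Commute B M := (Commute.refl B).exp_right
  have hmaps : ∀ x ∈ Module.End.eigenspace f μ,
      Matrix.mulVecLin B x ∈ Module.End.eigenspace f μ := by
    intro x hx
    rw [Module.End.mem_eigenspace_iff] at hx ⊢
    show M *ᵥ (B *ᵥ x) = μ • (B *ᵥ x)
    rw [Matrix.mulVec_mulVec, ← hBM.eq, ← Matrix.mulVec_mulVec]
    show B *ᵥ (f x) = _
    rw [hx, Matrix.mulVec_smul]
  let g : Module.End ℂ (Module.End.eigenspace f μ) := (Matrix.mulVecLin B).restrict hmaps
  have : Nontrivial (Module.End.eigenspace f μ) :=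
    ⟨⟨⟨v, hvE⟩, 0, by simp [Subtype.ext_iff, hv0]⟩⟩
  obtain ⟨l, hl⟩ := Module.End.exists_eigenvalue g
  obtain ⟨w, hw⟩ := hl.exists_hasEigenvector
  have hw0 : (w : Fin n → ℂ) ≠ 0 := fun h => hw.right (Subtype.ext h)
  have hBw : B *ᵥ (w : Fin n → ℂ) = l • (w : Fin n → ℂ) := by
    have h1 := hw.apply_eq_smul
    have h2 : ((g w : Module.End.eigenspace f μ) : Fin n → ℂ) = B *ᵥ (w : Fin n → ℂ) :=
      LinearMap.restrict_coe_apply _ _ _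
    rw [h1] at h2
    exact h2.symm
  have hls : l ∈ spectrum ℂ B := by
    rw [spectrum.mem_iff, Algebra.algebraMap_eq_smul_one, Matrix.isUnit_iff_isUnit_det,
      isUnit_iff_ne_zero, not_not, ← Matrix.exists_mulVec_eq_zero_iff]
    exact ⟨w, hw0, by
      rw [Matrix.sub_mulVec, hBw, Matrix.smul_mulVec, Matrix.one_mulVec, sub_self]⟩
  have hpow : ∀ k : ℕ, B ^ k *ᵥ (w : Fin n → ℂ) = l ^ k • (w : Fin n → ℂ) := by
    intro k
    induction k with
    | zero => simp [Matrix.one_mulVec]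
    | succ k ih =>
        rw [pow_succ, ← Matrix.mulVec_mulVec, hBw, Matrix.mulVec_smul, ih, smul_smul, pow_succ,
          mul_comm]
  have hS : HasSum (fun k : ℕ => ((k ! : ℂ)⁻¹ • B ^ k)) M := by
    rw [hM, NormedSpace.exp_eq_tsum (𝕂 := ℂ)]
    exact (NormedSpace.expSeries_summable' B).hasSum
  let L : Matrix (Fin n) (Fin n) ℂ →ₗ[ℂ] (Fin n → ℂ) :=
    { toFun := fun X => X *ᵥ (w : Fin n → ℂ)
      map_add' := fun X Y => Matrix.add_mulVec _ _ _
      map_smul' := fun c X => Matrix.smul_mulVec c X _ }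
  have hS2 := hS.mapL L.toContinuousLinearMap
  have hS3 : HasSum (fun k : ℕ => ((k ! : ℂ)⁻¹ * l ^ k) • (w : Fin n → ℂ))
      (M *ᵥ (w : Fin n → ℂ)) := by
    convert hS2 using 2 with k
    case e'_3 => rfl
    case e'_6 => rfl
    show _ = ((k ! : ℂ)⁻¹ • B ^ k) *ᵥ (w : Fin n → ℂ)
    rw [Matrix.smul_mulVec, hpow k, smul_smul]
  have hc : HasSum (fun k : ℕ => ((k ! : ℂ)⁻¹ * l ^ k)) (Complex.exp l) := by
    have h := (NormedSpace.expSeries_summable' (𝕂 := ℂ) (x := l)).hasSum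
    have : Complex.exp l = ∑' k : ℕ, (k ! : ℂ)⁻¹ • l ^ k := by
      rw [Complex.exp_eq_exp_ℂ, NormedSpace.exp_eq_tsum (𝕂 := ℂ)]
    rw [this]
    simpa [smul_eq_mul] using h
  have hMw : M *ᵥ (w : Fin n → ℂ) = Complex.exp l • (w : Fin n → ℂ) :=
    hS3.unique (hc.smul_const _)
  have hwE : M *ᵥ (w : Fin n → ℂ) = μ • (w : Fin n → ℂ) := by
    have := w.2
    rw [Module.End.mem_eigenspace_iff] at this
    exact this
  refine ⟨l, hls, ?_⟩
  have hz : (μ - Complex.exp l) • (w : Fin n → ℂ) = 0 := by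
    rw [sub_smul, ← hwE, ← hMw, sub_self]
  rcases smul_eq_zero.1 hz with h | h
  · exact (sub_eq_zero.1 h)
  · exact absurd h hw0

lemma aux_pow_lt (hn : 0 < n) (B : Matrix (Fin n) (Fin n) ℂ)
    (hB : ∀ μ ∈ spectrum ℂ B, μ.re < 0) :
    ∃ k : ℕ, 0 < k ∧ ‖NormedSpace.exp B ^ k‖ < 1 := by
  haveI : Nontrivial (Matrix (Fin n) (Fin n) ℂ) := by
    refine ⟨1, 0, fun h => ?_⟩
    have := Matrix.ext_iff.2 h ⟨0, hn⟩ ⟨0, hn⟩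
    simp at this
  set M := NormedSpace.exp B with hM
  have hrad : spectralRadius ℂ M < 1 := by
    have h1 : ∀ z ∈ spectrum ℂ M, ‖z‖₊ < 1 := by
      intro z hz
      obtain ⟨l, hl, rfl⟩ := aux_spec_exp B hz
      have h2 : ‖Complex.exp l‖ < 1 := by
        rw [Complex.norm_exp]
        exact Real.exp_lt_one_iff.2 (hB l hl)
      exact h2
    simpa using spectrum.spectralRadius_lt_of_forall_lt (a := M) (r := 1) h1
  have htends := spectrum.pow_nnnorm_pow_one_div_tendsto_nhds_spectralRadius M
  have hev : ∀ᶠ k : ℕ in Filter.atTop, (‖M ^ k‖₊ : ENNReal) ^ (1 / (k : ℝ)) < 1 :=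
    htends.eventually_lt_const hrad
  obtain ⟨k, hk, hk0⟩ := (hev.and (Filter.eventually_gt_atTop 0)).exists
  refine ⟨k, hk0, ?_⟩
  by_contra hle
  push_neg at hle
  have h1 : (1 : ENNReal) ≤ (‖M ^ k‖₊ : ENNReal) := by
    rw [ENNReal.one_le_coe_iff]
    exact_mod_cast hle
  have h2 : (1 : ENNReal) ≤ (‖M ^ k‖₊ : ENNReal) ^ (1 / (k : ℝ)) := by
    calc (1 : ENNReal) = 1 ^ (1 / (k : ℝ)) := (ENNReal.one_rpow _).symm
    _ ≤ _ := ENNReal.rpow_le_rpow h1 (by positivity)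
  exact absurd hk (not_lt.2 h2)

lemma aux_entry_le (X : Matrix (Fin n) (Fin n) ℂ) (i j : Fin n) : ‖X i j‖ ≤ ‖X‖ := by
  have h1 : ‖X i j‖₊ ≤ ∑ j', ‖X i j'‖₊ :=
    Finset.single_le_sum (f := fun j' => ‖X i j'‖₊) (fun _ _ => zero_le) (Finset.mem_univ j)
  have h2 : (∑ j', ‖X i j'‖₊) ≤ ‖X‖₊ := by
    rw [Matrix.linfty_opNNNorm_def]
    exact Finset.le_sup (f := fun i => ∑ j', ‖X i j'‖₊) (Finset.mem_univ i)
  exact_mod_cast h1.trans h2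

lemma aux_pow_mul_le (X Y : Matrix (Fin n) (Fin n) ℂ) {C : ℝ} (hY : ‖Y‖ ≤ C) :
    ∀ m : ℕ, ‖X ^ m * Y‖ ≤ ‖X‖ ^ m * C
  | 0 => by simpa using hY
  | (m+1) => by
      calc ‖X ^ (m+1) * Y‖ = ‖X * (X ^ m * Y)‖ := by rw [pow_succ', mul_assoc]
      _ ≤ ‖X‖ * ‖X ^ m * Y‖ := norm_mul_le _ _
      _ ≤ ‖X‖ * (‖X‖ ^ m * C) :=
            mul_le_mul_of_nonneg_left (aux_pow_mul_le X Y hY m) (norm_nonneg X)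
      _ = ‖X‖ ^ (m+1) * C := by ring

lemma aux_map_exp (A : Matrix (Fin n) (Fin n) ℝ) (t : ℝ) :
    (NormedSpace.exp (t • A)).map Complex.ofReal
      = NormedSpace.exp (t • A.map Complex.ofReal) := by
  have hcont : Continuous (Complex.ofRealHom.mapMatrix
      : Matrix (Fin n) (Fin n) ℝ →+* Matrix (Fin n) (Fin n) ℂ) :=
    continuous_id.matrix_map Complex.continuous_ofReal
  have h1 := NormedSpace.map_exp (Complex.ofRealHom.mapMatrix
      (m := Fin n)) hcont (t • A)
  have h2 : Complex.ofRealHom.mapMatrix (t • A) = t • A.map Complex.ofReal := by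
    ext i j
    simp [RingHom.mapMatrix_apply, Matrix.map_apply, Complex.real_smul]
  rw [h2] at h1
  rw [RingHom.mapMatrix_apply] at h1
  exact h1

lemma aux_decay (hn : 0 < n) (A : Matrix (Fin n) (Fin n) ℝ)
    (hA : ∀ μ ∈ spectrum ℂ (A.map Complex.ofReal), μ.re < 0) :
    ∃ C > 0, ∃ ε > 0, ∀ t : ℝ, 0 ≤ t → ∀ i j,
      |NormedSpace.exp (t • A) i j| ≤ C * Real.exp (-(ε * t)) := by
  haveI : Nontrivial (Matrix (Fin n) (Fin n) ℂ) := by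
    refine ⟨1, 0, fun h => ?_⟩
    have := Matrix.ext_iff.2 h ⟨0, hn⟩ ⟨0, hn⟩
    simp at this
  set B := A.map Complex.ofReal with hB
  obtain ⟨k, hk0, hk⟩ := aux_pow_lt hn B hA
  set c := ‖NormedSpace.exp B ^ k‖ with hc
  have hcpos : 0 < c := by
    rw [hc, norm_pos_iff]
    exact ((NormedSpace.isUnit_exp B).pow k).ne_zero
  have hcont : Continuous fun s : ℝ => NormedSpace.exp (s • B) :=
    NormedSpace.exp_continuous.comp (continuous_id.smul continuous_const)
  obtain ⟨C0, hC0⟩ :=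
    (isCompact_Icc (a := (0:ℝ)) (b := (k : ℝ))).exists_bound_of_continuousOn hcont.continuousOn
  set C1 := max C0 1 with hC1def
  have hC1pos : (0:ℝ) < C1 := lt_of_lt_of_le one_pos (le_max_right _ _)
  have hC1 : ∀ s ∈ Set.Icc (0:ℝ) (k:ℝ), ‖NormedSpace.exp (s • B)‖ ≤ C1 :=
    fun s hs => (hC0 s hs).trans (le_max_left _ _)
  have hkR : (0:ℝ) < (k:ℝ) := Nat.cast_pos.2 hk0
  have hlog : Real.log c < 0 := Real.log_neg hcpos hk
  set ε := -Real.log c / (k:ℝ) with hε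
  have hεpos : 0 < ε := div_pos (neg_pos.2 hlog) hkR
  refine ⟨C1 / c, by positivity, ε, hεpos, ?_⟩
  intro t ht i j
  set m := Nat.floor (t / (k:ℝ)) with hm
  set s := t - (m:ℝ) * (k:ℝ) with hs
  have hm_le : (m:ℝ) ≤ t / (k:ℝ) := Nat.floor_le (by positivity)
  have hlt : t / (k:ℝ) < (m:ℝ) + 1 := Nat.lt_floor_add_one _
  have hs0 : 0 ≤ s := by
    have : (m:ℝ) * (k:ℝ) ≤ t := by
      rw [← le_div_iff₀ hkR] at *
      nlinarith
    linarith
  have hsk : s ≤ (k:ℝ) := by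
    have : t < ((m:ℝ) + 1) * (k:ℝ) := by
      rw [← div_lt_iff₀ hkR]
      exact hlt
    nlinarith
  -- split the exponential
  have hsplit : NormedSpace.exp (t • B)
      = (NormedSpace.exp B ^ k) ^ m * NormedSpace.exp (s • B) := by
    have h1 : t • B = ((k * m : ℕ) : ℝ) • B + s • B := by
      rw [← add_smul]
      congr 1
      push_cast
      rw [hs]; ring
    rw [h1, Matrix.exp_add_of_commute _ _ (((Commute.refl B).smul_left _).smul_right _)]
    congr 1
    rw [Nat.cast_smul_eq_nsmul ℝ (k * m) B, Matrix.exp_nsmul, pow_mul]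
  -- norm bound
  have hnorm : ‖NormedSpace.exp (t • B)‖ ≤ c ^ m * C1 := by
    rw [hsplit]
    exact aux_pow_mul_le _ _ (hC1 s ⟨hs0, hsk⟩) m
  have hcm : c ^ m ≤ c⁻¹ * Real.exp (-(ε * t)) := by
    have h1 : c ^ m = Real.exp ((m:ℝ) * Real.log c) := by
      rw [Real.exp_nat_mul, Real.exp_log hcpos]
    have h2 : (m:ℝ) * Real.log c ≤ (t / (k:ℝ) - 1) * Real.log c := by
      apply mul_le_mul_of_nonpos_right _ hlog.le
      linarith [hlt]
    have h3 : (t / (k:ℝ) - 1) * Real.log c = -(ε * t) - Real.log c := by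
      rw [hε]; field_simp
    calc c ^ m = Real.exp ((m:ℝ) * Real.log c) := h1
    _ ≤ Real.exp (-(ε * t) - Real.log c) := by rw [← h3]; exact Real.exp_le_exp.2 h2
    _ = c⁻¹ * Real.exp (-(ε * t)) := by rw [Real.exp_sub, Real.exp_log hcpos]; ring
  have hentry : |NormedSpace.exp (t • A) i j| ≤ ‖NormedSpace.exp (t • B)‖ := by
    have h := aux_map_exp A t
    have h2 : (NormedSpace.exp (t • B)) i j
        = Complex.ofReal (NormedSpace.exp (t • A) i j) := by rw [← h]; rfl
    calc |NormedSpace.exp (t • A) i j|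
        = ‖(NormedSpace.exp (t • B)) i j‖ := by
          rw [h2, Complex.norm_real, Real.norm_eq_abs]
    _ ≤ _ := aux_entry_le _ i j
  calc |NormedSpace.exp (t • A) i j| ≤ ‖NormedSpace.exp (t • B)‖ := hentry
  _ ≤ c ^ m * C1 := hnorm
  _ ≤ (c⁻¹ * Real.exp (-(ε * t))) * C1 :=
        mul_le_mul_of_nonneg_right hcm hC1pos.le
  _ = C1 / c * Real.exp (-(ε * t)) := by ring

lemma aux_exp_comm (A : Matrix (Fin n) (Fin n) ℝ) (t : ℝ) :
    A * NormedSpace.exp (t • A) = NormedSpace.exp (t • A) * A :=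
  (((Commute.refl A).smul_right t).exp_right).eq

lemma aux_triple_deriv (A M : Matrix (Fin n) (Fin n) ℝ) (t : ℝ) (i j : Fin n) :
    HasDerivAt (fun s : ℝ => (NormedSpace.exp (s • A) * M * NormedSpace.exp (s • Aᵀ)) i j)
      ((A * (NormedSpace.exp (t • A) * M * NormedSpace.exp (t • Aᵀ))
        + (NormedSpace.exp (t • A) * M * NormedSpace.exp (t • Aᵀ)) * Aᵀ) i j) t := by
  have h1 : HasDerivAt (fun s : ℝ => NormedSpace.exp (s • A))
      (A * NormedSpace.exp (t • A)) t := hasDerivAt_exp_smul_const' A t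
  have h2 : HasDerivAt (fun s : ℝ => NormedSpace.exp (s • Aᵀ))
      (NormedSpace.exp (t • Aᵀ) * Aᵀ) t := hasDerivAt_exp_smul_const Aᵀ t
  have h3 := (h1.mul_const M).mul h2
  have h4 : HasDerivAt (fun s : ℝ => NormedSpace.exp (s • A) * M * NormedSpace.exp (s • Aᵀ))
      (A * (NormedSpace.exp (t • A) * M * NormedSpace.exp (t • Aᵀ))
        + (NormedSpace.exp (t • A) * M * NormedSpace.exp (t • Aᵀ)) * Aᵀ) t := by
    exact h3.congr_deriv (by simp only [mul_assoc])
  let L : Matrix (Fin n) (Fin n) ℝ →ₗ[ℝ] ℝ :=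
    { toFun := fun X => X i j, map_add' := fun _ _ => rfl, map_smul' := fun _ _ => rfl }
  have h5 := (L.toContinuousLinearMap.hasFDerivAt.comp t h4.hasFDerivAt).hasDerivAt
  exact L.toContinuousLinearMap.hasFDerivAt.comp_hasDerivAt t h4

end Aux

lemma aux_spectrum_transpose (m : ℕ) (B : Matrix (Fin m) (Fin m) ℂ) (μ : ℂ)
    (h : μ ∈ spectrum ℂ Bᵀ) : μ ∈ spectrum ℂ B := by
  rw [spectrum.mem_iff] at h ⊢
  intro hu
  apply h
  have htr : (algebraMap ℂ (Matrix (Fin m) (Fin m) ℂ) μ - B)ᵀ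
      = algebraMap ℂ (Matrix (Fin m) (Fin m) ℂ) μ - Bᵀ := by
    rw [Matrix.transpose_sub]
    congr 1
    rw [Algebra.algebraMap_eq_smul_one, Matrix.transpose_smul, Matrix.transpose_one]
  rw [← htr, Matrix.isUnit_iff_isUnit_det, Matrix.det_transpose,
    ← Matrix.isUnit_iff_isUnit_det]
  exact hu

attribute [local instance] Matrix.normedAddCommGroup Matrix.normedSpace

/-- If `A` is a Hurwitz real `n × n` matrix and `Q` any real `n × n`
matrix, then `W := ∫₀^∞ exp(tA) Q exp(tAᵀ) dt` converges and is the unique solution of the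
Lyapunov equation `A W + W Aᵀ + Q = 0`. -/
theorem hurwitz_lyapunov_solution {n : ℕ}
    (A : Matrix (Fin n) (Fin n) ℝ)
    (hA : ∀ μ ∈ spectrum ℂ (A.map (Complex.ofReal)), μ.re < 0)
    (Q : Matrix (Fin n) (Fin n) ℝ)
    (W : Matrix (Fin n) (Fin n) ℝ)
    (hW : W = ∫ t in Set.Ici (0 : ℝ),
      NormedSpace.exp (t • A) * Q * NormedSpace.exp (t • Aᵀ)) :
    @IntegrableOn ℝ (Matrix (Fin n) (Fin n) ℝ) _ _ SeminormedAddGroup.toContinuousENorm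
        (fun t : ℝ => NormedSpace.exp (t • A) * Q * NormedSpace.exp (t • Aᵀ))
        (Set.Ici 0) volume ∧
      A * W + W * Aᵀ + Q = 0 ∧
      ∀ W' : Matrix (Fin n) (Fin n) ℝ, A * W' + W' * Aᵀ + Q = 0 → W' = W := by
  rcases Nat.eq_zero_or_pos n with hn | hn
  · subst hn
    haveI : Subsingleton (Matrix (Fin 0) (Fin 0) ℝ) :=
      ⟨fun a b => by ext i j; exact i.elim0⟩
    refine ⟨?_, Subsingleton.elim _ _, fun W' _ => Subsingleton.elim _ _⟩
    have h0 : (fun t : ℝ => NormedSpace.exp (t • A) * Q * NormedSpace.exp (t • Aᵀ))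
        = fun _ => 0 := funext fun t => Subsingleton.elim _ _
    rw [h0]
    exact integrableOn_zero
  -- main case
  obtain ⟨C₁, hC₁, ε₁, hε₁, hd₁⟩ := aux_decay hn A hA
  have hAT : ∀ μ ∈ spectrum ℂ ((Aᵀ).map Complex.ofReal), μ.re < 0 := by
    intro μ hμ
    apply hA
    rw [Matrix.transpose_map] at hμ
    exact aux_spectrum_transpose n (A.map Complex.ofReal) μ hμ
  obtain ⟨C₂, hC₂, ε₂, hε₂, hd₂⟩ := aux_decay hn Aᵀ hAT
  set F := fun t : ℝ => NormedSpace.exp (t • A) * Q * NormedSpace.exp (t • Aᵀ) with hF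
  have hEE : ∀ t : ℝ, Real.exp (-(ε₁ * t)) * Real.exp (-(ε₂ * t))
      = Real.exp (-((ε₁ + ε₂) * t)) := by
    intro t
    rw [← Real.exp_add]
    ring_nf
  have hbound : ∀ (M : Matrix (Fin n) (Fin n) ℝ) (t : ℝ), 0 ≤ t → ∀ i j,
      |(NormedSpace.exp (t • A) * M * NormedSpace.exp (t • Aᵀ)) i j|
        ≤ (C₁ * C₂ * ∑ l, ∑ k, |M k l|) * Real.exp (-((ε₁ + ε₂) * t)) := by
    intro M t ht i j
    have hEM : ∀ l, |(NormedSpace.exp (t • A) * M) i l|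
        ≤ C₁ * Real.exp (-(ε₁ * t)) * ∑ k, |M k l| := by
      intro l
      rw [Matrix.mul_apply]
      calc |∑ k, NormedSpace.exp (t • A) i k * M k l|
          ≤ ∑ k, |NormedSpace.exp (t • A) i k * M k l| := Finset.abs_sum_le_sum_abs _ _
        _ ≤ ∑ k, C₁ * Real.exp (-(ε₁ * t)) * |M k l| := by
            refine Finset.sum_le_sum fun k _ => ?_
            rw [abs_mul]
            exact mul_le_mul_of_nonneg_right (hd₁ t ht i k) (abs_nonneg _)
        _ = C₁ * Real.exp (-(ε₁ * t)) * ∑ k, |M k l| := by rw [Finset.mul_sum]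
    rw [Matrix.mul_apply]
    calc |∑ l, (NormedSpace.exp (t • A) * M) i l * NormedSpace.exp (t • Aᵀ) l j|
        ≤ ∑ l, |(NormedSpace.exp (t • A) * M) i l * NormedSpace.exp (t • Aᵀ) l j| :=
          Finset.abs_sum_le_sum_abs _ _
      _ ≤ ∑ l, (C₁ * Real.exp (-(ε₁ * t)) * ∑ k, |M k l|) * (C₂ * Real.exp (-(ε₂ * t))) := by
          refine Finset.sum_le_sum fun l _ => ?_
          rw [abs_mul]
          exact mul_le_mul (hEM l) (hd₂ t ht l j) (abs_nonneg _) (by positivity)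
      _ = ∑ l, (C₁ * C₂ * ∑ k, |M k l|) * (Real.exp (-(ε₁ * t)) * Real.exp (-(ε₂ * t))) := by
          refine Finset.sum_congr rfl fun l _ => by ring
      _ = (C₁ * C₂ * ∑ l, ∑ k, |M k l|) * Real.exp (-((ε₁ + ε₂) * t)) := by
          rw [← Finset.sum_mul, hEE t, Finset.mul_sum]
  -- integrable dominating function
  have hgint : ∀ K : ℝ, IntegrableOn (fun t : ℝ => K * Real.exp (-((ε₁ + ε₂) * t)))
      (Set.Ici (0:ℝ)) := by
    intro K
    rw [integrableOn_Ici_iff_integrableOn_Ioi]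
    have h1 : IntegrableOn (fun t : ℝ => Real.exp (-(ε₁ + ε₂) * t)) (Set.Ioi (0:ℝ)) :=
      exp_neg_integrableOn_Ioi 0 (by positivity)
    have h2 := h1.const_mul K
    refine h2.congr (Filter.Eventually.of_forall fun t => by show K * Real.exp (-(ε₁ + ε₂) * t) = K * Real.exp (-((ε₁ + ε₂) * t)); rw [neg_mul])
  have hFmeas : ∀ i j, Continuous fun t => F t i j := fun i j =>
    continuous_iff_continuousAt.2 fun t => (aux_triple_deriv A Q t i j).continuousAt
  have hFcont : Continuous F := continuous_matrix hFmeas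
  have hQsum : (0:ℝ) ≤ ∑ l, ∑ k, |Q k l| :=
    Finset.sum_nonneg fun l _ => Finset.sum_nonneg fun k _ => abs_nonneg _
  haveI : TopologicalSpace.PseudoMetrizableSpace (Matrix (Fin n) (Fin n) ℝ) :=
    inferInstanceAs (TopologicalSpace.PseudoMetrizableSpace (Fin n → Fin n → ℝ))
  letI : ContinuousENorm (Matrix (Fin n) (Fin n) ℝ) := SeminormedAddGroup.toContinuousENorm
  have hFint : IntegrableOn F (Set.Ici (0:ℝ)) := by
    refine Integrable.mono' (hgint (C₁ * C₂ * ∑ l, ∑ k, |Q k l|))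
      hFcont.aestronglyMeasurable.restrict ?_
    refine (ae_restrict_iff' measurableSet_Ici).2 (Filter.Eventually.of_forall fun t ht => ?_)
    rw [Matrix.norm_le_iff (by positivity)]
    intro i j
    rw [Real.norm_eq_abs]
    exact hbound Q t ht i j
  refine ⟨hFint, ?_⟩
  -- entrywise integrability
  have hFiej : ∀ i j, IntegrableOn (fun t => F t i j) (Set.Ici (0:ℝ)) := by
    intro i j
    refine Integrable.mono' (hgint (C₁ * C₂ * ∑ l, ∑ k, |Q k l|))
      ((hFmeas i j).aestronglyMeasurable.restrict) ?_
    refine (ae_restrict_iff' measurableSet_Ici).2 (Filter.Eventually.of_forall fun t ht => ?_)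
    rw [Real.norm_eq_abs]
    exact hbound Q t ht i j
  -- entries of W
  have hWe : ∀ i j, W i j = ∫ t in Set.Ici (0:ℝ), F t i j := by
    intro i j
    let L : Matrix (Fin n) (Fin n) ℝ →ₗ[ℝ] ℝ :=
      { toFun := fun X => X i j, map_add' := fun _ _ => rfl, map_smul' := fun _ _ => rfl }
    have h := L.toContinuousLinearMap.integral_comp_comm hFint
    rw [hW]
    exact h.symm
  have hintA : ∀ i j, IntegrableOn (fun t => (A * F t) i j) (Set.Ici (0:ℝ)) := by
    intro i j
    have h : IntegrableOn (fun t => ∑ k, A i k * F t k j) (Set.Ici (0:ℝ)) :=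
      integrable_finset_sum _ fun k _ => (hFiej k j).const_mul _
    exact h.congr (Filter.Eventually.of_forall fun t => by simp [Matrix.mul_apply])
  have hintT : ∀ i j, IntegrableOn (fun t => (F t * Aᵀ) i j) (Set.Ici (0:ℝ)) := by
    intro i j
    have h : IntegrableOn (fun t => ∑ k, F t i k * Aᵀ k j) (Set.Ici (0:ℝ)) :=
      integrable_finset_sum _ fun k _ => (hFiej i k).mul_const _
    exact h.congr (Filter.Eventually.of_forall fun t => by simp [Matrix.mul_apply])
  have hAW : ∀ i j, (A * W) i j = ∫ t in Set.Ici (0:ℝ), (A * F t) i j := by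
    intro i j
    rw [Matrix.mul_apply]
    calc ∑ k, A i k * W k j
        = ∑ k, ∫ t in Set.Ici (0:ℝ), A i k * F t k j := by
          refine Finset.sum_congr rfl fun k _ => ?_
          rw [hWe k j, ← integral_const_mul]
      _ = ∫ t in Set.Ici (0:ℝ), ∑ k, A i k * F t k j :=
          (integral_finset_sum _ fun k _ => (hFiej k j).const_mul _).symm
      _ = ∫ t in Set.Ici (0:ℝ), (A * F t) i j := by
          exact integral_congr_ae (Filter.Eventually.of_forall fun t => by
            simp [Matrix.mul_apply])
  have hWA : ∀ i j, (W * Aᵀ) i j = ∫ t in Set.Ici (0:ℝ), (F t * Aᵀ) i j := by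
    intro i j
    rw [Matrix.mul_apply]
    calc ∑ k, W i k * Aᵀ k j
        = ∑ k, ∫ t in Set.Ici (0:ℝ), F t i k * Aᵀ k j := by
          refine Finset.sum_congr rfl fun k _ => ?_
          rw [hWe i k, ← integral_mul_const]
      _ = ∫ t in Set.Ici (0:ℝ), ∑ k, F t i k * Aᵀ k j :=
          (integral_finset_sum _ fun k _ => (hFiej i k).mul_const _).symm
      _ = ∫ t in Set.Ici (0:ℝ), (F t * Aᵀ) i j := by
          exact integral_congr_ae (Filter.Eventually.of_forall fun t => by
            simp [Matrix.mul_apply])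
  -- limit at infinity of entries
  have hlim : ∀ (M : Matrix (Fin n) (Fin n) ℝ) i j,
      Filter.Tendsto (fun t : ℝ => (NormedSpace.exp (t • A) * M
        * NormedSpace.exp (t • Aᵀ)) i j) Filter.atTop (nhds (0:ℝ)) := by
    intro M i j
    apply squeeze_zero_norm' (a := fun t => (C₁ * C₂ * ∑ l, ∑ k, |M k l|)
      * Real.exp (-((ε₁ + ε₂) * t)))
    · filter_upwards [Filter.eventually_ge_atTop (0:ℝ)] with t ht
      rw [Real.norm_eq_abs]
      exact hbound M t ht i j
    · have h0 : Filter.Tendsto (fun t : ℝ => (ε₁ + ε₂) * t) Filter.atTop Filter.atTop :=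
        Filter.Tendsto.const_mul_atTop (by positivity) Filter.tendsto_id
      have h1 : Filter.Tendsto (fun t : ℝ => -((ε₁ + ε₂) * t)) Filter.atTop Filter.atBot :=
        Filter.tendsto_neg_atTop_atBot.comp h0
      have h2 := Real.tendsto_exp_atBot.comp h1
      have h3 := h2.const_mul (C₁ * C₂ * ∑ l, ∑ k, |M k l|)
      simpa using h3
  -- FTC per entry
  have hFTC : ∀ i j, (∫ t in Set.Ici (0:ℝ), ((A * F t) i j + (F t * Aᵀ) i j)) = - Q i j := by
    intro i j
    have hderiv : ∀ t ∈ Set.Ioi (0:ℝ), HasDerivAt (fun s => F s i j)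
        ((A * F t + F t * Aᵀ) i j) t := fun t _ => aux_triple_deriv A Q t i j
    have hcont0 : ContinuousWithinAt (fun s => F s i j) (Set.Ici (0:ℝ)) 0 :=
      (hFmeas i j).continuousWithinAt
    have hint' : IntegrableOn (fun t => (A * F t + F t * Aᵀ) i j) (Set.Ioi (0:ℝ)) := by
      have h := MeasureTheory.IntegrableOn.mono_set ((hintA i j).add (hintT i j)) Set.Ioi_subset_Ici_self
      exact h.congr (Filter.Eventually.of_forall fun t => (Matrix.add_apply _ _ _ _).symm)
    have := integral_Ioi_of_hasDerivAt_of_tendsto hcont0 hderiv hint' (hlim Q i j)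
    have hF0 : F 0 i j = Q i j := by
      show (NormedSpace.exp ((0:ℝ) • A) * Q * NormedSpace.exp ((0:ℝ) • Aᵀ)) i j = Q i j
      rw [zero_smul, zero_smul, NormedSpace.exp_zero, one_mul, mul_one]
    rw [MeasureTheory.integral_Ici_eq_integral_Ioi]
    calc (∫ t in Set.Ioi (0:ℝ), ((A * F t) i j + (F t * Aᵀ) i j))
        = ∫ t in Set.Ioi (0:ℝ), (A * F t + F t * Aᵀ) i j := by
          exact integral_congr_ae (Filter.Eventually.of_forall fun t => by
            simp [Matrix.add_apply])
      _ = 0 - F 0 i j := this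
      _ = - Q i j := by rw [hF0, zero_sub]
  have heq : A * W + W * Aᵀ + Q = 0 := by
    ext i j
    show (A * W + W * Aᵀ + Q) i j = 0
    rw [Matrix.add_apply, Matrix.add_apply, hAW, hWA,
      ← integral_add ((hintA i j).mono_set (by rfl)) ((hintT i j).mono_set (by rfl)),
      hFTC i j]
    ring
  refine ⟨heq, ?_⟩
  intro W' hW'
  set D := W' - W with hD
  have hDeq : A * D + D * Aᵀ = 0 := by
    have h2 : A * D + D * Aᵀ = (A * W' + W' * Aᵀ + Q) - (A * W + W * Aᵀ + Q) := by
      rw [hD, Matrix.mul_sub, Matrix.sub_mul]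
      abel
    rw [h2, hW', heq, sub_self]
  have hz : ∀ i j, D i j = 0 := by
    intro i j
    set g : ℝ → ℝ := fun s => (NormedSpace.exp (s • A) * D * NormedSpace.exp (s • Aᵀ)) i j
      with hg
    have hder : ∀ t : ℝ, HasDerivAt g 0 t := by
      intro t
      have h := aux_triple_deriv A D t i j
      have hc1 : A * NormedSpace.exp (t • A) = NormedSpace.exp (t • A) * A :=
        aux_exp_comm A t
      have hc2 : Aᵀ * NormedSpace.exp (t • Aᵀ) = NormedSpace.exp (t • Aᵀ) * Aᵀ :=
        aux_exp_comm Aᵀ t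
      set E := NormedSpace.exp (t • A) with hE
      set ET := NormedSpace.exp (t • Aᵀ) with hET
      have e1 : A * (E * D * ET) = E * (A * D) * ET := by
        rw [← mul_assoc, ← mul_assoc, hc1, mul_assoc E A D]
      have e2 : (E * D * ET) * Aᵀ = E * (D * Aᵀ) * ET := by
        rw [mul_assoc (E * D) ET Aᵀ, ← hc2, ← mul_assoc (E * D) Aᵀ ET, mul_assoc E D Aᵀ]
      have hval : A * (E * D * ET) + (E * D * ET) * Aᵀ = 0 := by
        rw [e1, e2, ← Matrix.add_mul, ← Matrix.mul_add, hDeq, Matrix.mul_zero,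
          Matrix.zero_mul]
      rw [hval] at h
      simpa using h
    have hdiff : Differentiable ℝ g := fun t => (hder t).differentiableAt
    have hconst : ∀ t : ℝ, g t = g 0 :=
      fun t => is_const_of_deriv_eq_zero hdiff (fun t => (hder t).deriv) t 0
    have hg0 : g 0 = D i j := by
      show (NormedSpace.exp ((0:ℝ) • A) * D * NormedSpace.exp ((0:ℝ) • Aᵀ)) i j = D i j
      rw [zero_smul, zero_smul, NormedSpace.exp_zero, one_mul, mul_one]
    have htz : Filter.Tendsto g Filter.atTop (nhds (0:ℝ)) := hlim D i j
    have htc : Filter.Tendsto g Filter.atTop (nhds (D i j)) := by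
      have : Filter.Tendsto (fun _ : ℝ => D i j) Filter.atTop (nhds (D i j)) :=
        tendsto_const_nhds
      refine this.congr fun t => ?_
      rw [hconst t, hg0]
    have := tendsto_nhds_unique htc htz
    exact this
  have hD0 : D = 0 := by
    ext i j
    rw [hz i j]
    rfl
  have : W' - W = 0 := hD0
  exact sub_eq_zero.mp this
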